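/- Let λ = (λ_1,...,λ_m) be a partition with λ_1 = n and I_λ the Ferrers ideal of the Ferrers graph G_λ in K[x_1,...,x_m,y_1,...,y_n]. Then the LCM-dual of I_λ equals the Alexander dual of the edge ideal of the complement graph G_λ^c: \widehat{I_λ} = (I(G_λ^c))^⋆. -/

import Mathlib

open MvPolynomial

/-- for a Ferrers graph `G_λ` (edges `{x_i, y_j}` for `(j:ℕ) < λ i`, using
`0`-based indexing) with `λ 0 = n`, the LCM-dual of the Ferrers ideal `I_λ` equals the
Alexander dual of the edge ideal of the complement graph `G_λᶜ`, namely the intersection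
`⋂ (x_u, x_v)` over all non-edges `{u,v}` of `G_λ` (pairs of distinct vertices among the
`m + n` vertices that are not adjacent in `G_λ`). -/
theorem ferrers_dual_eq_alexander_dual {m n : ℕ} {K : Type*} [Field K]
    (hm : 0 < m) (hn : 0 < n)
    (lam : Fin m → ℕ)
    (hanti : ∀ i j : Fin m, i ≤ j → lam j ≤ lam i)
    (hfirst : lam ⟨0, hm⟩ = n)
    (hpos : ∀ i, 1 ≤ lam i)
    (A : (Fin m ⊕ Fin n) →₀ ℕ)
    (hA : A = ∑ v : Fin m ⊕ Fin n, Finsupp.single v 1)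
    (adj : (Fin m ⊕ Fin n) → (Fin m ⊕ Fin n) → Prop)
    (hadj : adj = fun u v => ∃ (i : Fin m) (j : Fin n),
      ((u = Sum.inl i ∧ v = Sum.inr j) ∨ (u = Sum.inr j ∧ v = Sum.inl i)) ∧
        (j : ℕ) < lam i) :
    Ideal.span ((fun p : Fin m × Fin n =>
        monomial (A - Finsupp.single (Sum.inl p.1) 1 - Finsupp.single (Sum.inr p.2) 1)
          (1 : K)) '' {p | (p.2 : ℕ) < lam p.1})
      = ⨅ (p : (Fin m ⊕ Fin n) × (Fin m ⊕ Fin n))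
          (_ : p.1 ≠ p.2 ∧ ¬ adj p.1 p.2),
          Ideal.span {X p.1, X p.2} := by
  subst hadj
  have hAapp : ∀ w, A w = 1 := by
    intro w
    rw [hA, Finsupp.finset_sum_apply]
    rw [Finset.sum_eq_single w (fun b _ hb => Finsupp.single_eq_of_ne' hb) (by simp)]
    simp
  have hgen : ∀ (p : Fin m × Fin n) (w : Fin m ⊕ Fin n),
      ((A - Finsupp.single (Sum.inl p.1) 1 - Finsupp.single (Sum.inr p.2) 1 :
          (Fin m ⊕ Fin n) →₀ ℕ)) w
        = if w = Sum.inl p.1 ∨ w = Sum.inr p.2 then 0 else 1 := by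
    intro p w
    rw [Finsupp.tsub_apply, Finsupp.tsub_apply, hAapp]
    by_cases h1 : w = Sum.inl p.1
    · subst h1; simp [Finsupp.single_apply]
    · by_cases h2 : w = Sum.inr p.2
      · subst h2; simp [Finsupp.single_apply, h1]
      · simp [Finsupp.single_apply, h1, h2, Ne.symm h1, Ne.symm h2]
  have hle : ∀ (p : Fin m × Fin n) (d : (Fin m ⊕ Fin n) →₀ ℕ),
      (A - Finsupp.single (Sum.inl p.1) 1 - Finsupp.single (Sum.inr p.2) 1) ≤ d ↔
        ∀ w, w ≠ Sum.inl p.1 → w ≠ Sum.inr p.2 → d w ≠ 0 := by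
    intro p d
    rw [Finsupp.le_def]
    constructor
    · intro h w hw1 hw2
      have := h w
      rw [hgen] at this
      simp [hw1, hw2] at this
      omega
    · intro h w
      rw [hgen]
      by_cases h1 : w = Sum.inl p.1 ∨ w = Sum.inr p.2
      · simp [h1]
      · push_neg at h1
        have := h w h1.1 h1.2
        simp only [h1.1, h1.2, or_self, if_false]
        omega
  have himg : ((fun p : Fin m × Fin n =>
        monomial (A - Finsupp.single (Sum.inl p.1) 1 - Finsupp.single (Sum.inr p.2) 1)
          (1 : K)) '' {p | (p.2 : ℕ) < lam p.1})
      = (fun s => monomial s (1 : K)) ''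
          ((fun p : Fin m × Fin n =>
            A - Finsupp.single (Sum.inl p.1) 1 - Finsupp.single (Sum.inr p.2) 1) ''
            {p | (p.2 : ℕ) < lam p.1}) := by
    rw [Set.image_image]
  have hpair : ∀ u v : Fin m ⊕ Fin n,
      ({X u, X v} : Set (MvPolynomial (Fin m ⊕ Fin n) K)) = X '' {u, v} := by
    intro u v; rw [Set.image_pair]
  ext f
  rw [himg, mem_ideal_span_monomial_image]
  simp only [Submodule.mem_iInf]
  constructor
  · intro h p hp
    rw [hpair, mem_ideal_span_X_image]
    intro d hd
    obtain ⟨s, ⟨q, hq, rfl⟩, hsd⟩ := h d hd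
    obtain ⟨hne, hnadj⟩ := hp
    have hsd' := (hle q d).mp hsd
    by_cases h1 : p.1 ≠ Sum.inl q.1 ∧ p.1 ≠ Sum.inr q.2
    · exact ⟨p.1, by simp, hsd' p.1 h1.1 h1.2⟩
    · push_neg at h1
      have h2 : p.2 ≠ Sum.inl q.1 ∧ p.2 ≠ Sum.inr q.2 := by
        by_cases ha : p.1 = Sum.inl q.1
        · refine ⟨?_, ?_⟩
          · intro hh; exact hne (ha.trans hh.symm)
          · intro hh
            exact hnadj ⟨q.1, q.2, Or.inl ⟨ha, hh⟩, hq⟩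
        · have hb : p.1 = Sum.inr q.2 := h1 ha
          refine ⟨?_, ?_⟩
          · intro hh
            exact hnadj ⟨q.1, q.2, Or.inr ⟨hb, hh⟩, hq⟩
          · intro hh; exact hne (hb.trans hh.symm)
      exact ⟨p.2, by simp, hsd' p.2 h2.1 h2.2⟩
  · intro h d hd
    have hS : ∀ u v : Fin m ⊕ Fin n, u ≠ v → d u = 0 → d v = 0 →
        (∃ (i : Fin m) (j : Fin n),
          ((u = Sum.inl i ∧ v = Sum.inr j) ∨ (u = Sum.inr j ∧ v = Sum.inl i)) ∧
            (j : ℕ) < lam i) := by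
      intro u v huv hu hv
      by_contra hc
      have := h (u, v) ⟨huv, hc⟩
      rw [hpair, mem_ideal_span_X_image] at this
      obtain ⟨w, hw, hwd⟩ := this d hd
      rcases hw with rfl | rfl
      · exact hwd hu
      · exact hwd hv
    have key : ∃ q : Fin m × Fin n, (q.2 : ℕ) < lam q.1 ∧
        ∀ w, w ≠ Sum.inl q.1 → w ≠ Sum.inr q.2 → d w ≠ 0 := by
      by_cases hx : ∃ i : Fin m, d (Sum.inl i) = 0
      · obtain ⟨i, hi⟩ := hx
        by_cases hy : ∃ j : Fin n, d (Sum.inr j) = 0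
        · obtain ⟨j, hj⟩ := hy
          have hedge : (j : ℕ) < lam i := by
            obtain ⟨i', j', hor, hlt⟩ := hS (Sum.inl i) (Sum.inr j) (by simp) hi hj
            rcases hor with ⟨h1, h2⟩ | ⟨h1, h2⟩
            · cases h1; cases h2; exact hlt
            · exact absurd h1 (by simp)
          refine ⟨(i, j), hedge, ?_⟩
          intro w hw1 hw2 hw0
          rcases w with i' | j'
          · obtain ⟨a, b, hor, _⟩ := hS (Sum.inl i') (Sum.inl i) hw1 hw0 hi
            rcases hor with ⟨h1, h2⟩ | ⟨h1, h2⟩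
            · exact absurd h2 (by simp)
            · exact absurd h1 (by simp)
          · obtain ⟨a, b, hor, _⟩ := hS (Sum.inr j') (Sum.inr j) hw2 hw0 hj
            rcases hor with ⟨h1, h2⟩ | ⟨h1, h2⟩
            · exact absurd h1 (by simp)
            · exact absurd h2 (by simp)
        · push_neg at hy
          refine ⟨(i, ⟨0, hn⟩), by simpa using Nat.lt_of_lt_of_le Nat.zero_lt_one (hpos i), ?_⟩
          intro w hw1 _ hw0
          rcases w with i' | j'
          · obtain ⟨a, b, hor, _⟩ := hS (Sum.inl i') (Sum.inl i) hw1 hw0 hi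
            rcases hor with ⟨h1, h2⟩ | ⟨h1, h2⟩
            · exact absurd h2 (by simp)
            · exact absurd h1 (by simp)
          · exact hy j' hw0
      · push_neg at hx
        by_cases hy : ∃ j : Fin n, d (Sum.inr j) = 0
        · obtain ⟨j, hj⟩ := hy
          refine ⟨(⟨0, hm⟩, j), by rw [hfirst]; exact j.2, ?_⟩
          intro w _ hw2 hw0
          rcases w with i' | j'
          · exact hx i' hw0
          · obtain ⟨a, b, hor, _⟩ := hS (Sum.inr j') (Sum.inr j) hw2 hw0 hj
            rcases hor with ⟨h1, h2⟩ | ⟨h1, h2⟩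
            · exact absurd h1 (by simp)
            · exact absurd h2 (by simp)
        · push_neg at hy
          refine ⟨(⟨0, hm⟩, ⟨0, hn⟩), by rw [hfirst]; exact hn, ?_⟩
          intro w _ _ hw0
          rcases w with i' | j'
          · exact hx i' hw0
          · exact hy j' hw0
    obtain ⟨q, hq, hcov⟩ := key
    exact ⟨_, ⟨q, hq, rfl⟩, (hle q d).mpr hcov⟩
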